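/- For any algebraic curvature tensor R and p-form ω on an n-dimensional Euclidean vector space, with ω^{S²₀} = Σ_α (S_α ω)⊗S_α over an orthonormal basis {S_α} of trace-free symmetric tensors, one has g(R̄(ω^{S²₀}), ω^{S²₀}) = g(𝓡(ω^{S²₀}), ω^{S²₀}), i.e., the quadratic form only depends on the curvature operator of the second kind 𝓡 = pr_{S²₀} ∘ R̄|_{S²₀}. -/
import Mathlib


/-- `g(R̄(ω^{S²₀}), ω^{S²₀}) = g(𝓡(ω^{S²₀}), ω^{S²₀})`: the quadratic form on
`ω^{S²₀} = ∑_α (S_α ω) ⊗ S_α` only depends on the curvature operator of the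
second kind `𝓡 = pr_{S²₀} ∘ R̄|_{S²₀}`. -/
theorem quadratic_form_depends_only_on_second_kind
    (n p N : ℕ) (hN : N = (n - 1) * (n + 2) / 2)
    (R : Fin n → Fin n → Fin n → Fin n → ℝ)
    (hskew : ∀ i j k l, R i j k l = - R j i k l)
    (hpair : ∀ i j k l, R i j k l = R k l i j)
    (hbianchi : ∀ i j k l, R i j k l + R j k i l + R k i j l = 0)
    (S : Fin N → Matrix (Fin n) (Fin n) ℝ)
    (hsymm : ∀ α, (S α).IsSymm) (htr : ∀ α, (S α).trace = 0)
    (hortho : ∀ α β, (∑ i, ∑ j, S α i j * S β i j) = if α = β then (1 : ℝ) else 0)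
    (ω : (Fin p → Fin n) → ℝ)
    (hω : ∀ (I : Fin p → Fin n) (a b : Fin p), a ≠ b →
      ω (I ∘ Equiv.swap a b) = - ω I)
    (Sω : Fin N → (Fin p → Fin n) → ℝ)
    (hSω : ∀ α I, Sω α I = ∑ k, ∑ j, S α j (I k) * ω (Function.update I k j)) :
    (∑ α, ∑ β, (∑ I : Fin p → Fin n, Sω α I * Sω β I) *
        (∑ i, ∑ j, (∑ k, ∑ l, R i k l j * S α k l) * S β i j))
      = ∑ α, ∑ β, (∑ I : Fin p → Fin n, Sω α I * Sω β I) *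
          (∑ i, ∑ j, ((∑ k, ∑ l, R i k l j * S α k l)
              - (∑ m, ∑ k, ∑ l, R m k l m * S α k l) / n * (if i = j then 1 else 0))
            * S β i j) := by
  refine Finset.sum_congr rfl fun α _ => Finset.sum_congr rfl fun β _ => ?_
  congr 1
  have htrβ : ∑ i, S β i i = 0 := htr β
  rw [eq_comm]
  calc ∑ i, ∑ j, ((∑ k, ∑ l, R i k l j * S α k l)
          - (∑ m, ∑ k, ∑ l, R m k l m * S α k l) / n * (if i = j then 1 else 0))
        * S β i j
      = ∑ i, ∑ j, ((∑ k, ∑ l, R i k l j * S α k l) * S β i j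
          - (∑ m, ∑ k, ∑ l, R m k l m * S α k l) / n
            * ((if i = j then 1 else 0) * S β i j)) := by
        refine Finset.sum_congr rfl fun i _ => Finset.sum_congr rfl fun j _ => ?_
        ring
    _ = (∑ i, ∑ j, (∑ k, ∑ l, R i k l j * S α k l) * S β i j)
          - (∑ m, ∑ k, ∑ l, R m k l m * S α k l) / n
            * (∑ i, ∑ j, (if i = j then 1 else 0) * S β i j) := by
        simp [Finset.sum_sub_distrib, Finset.mul_sum]
    _ = ∑ i, ∑ j, (∑ k, ∑ l, R i k l j * S α k l) * S β i j := by
        have : ∑ i, ∑ j, (if i = j then (1:ℝ) else 0) * S β i j = ∑ i, S β i i := by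
          refine Finset.sum_congr rfl fun i _ => ?_
          simp [Finset.sum_ite_eq, eq_comm]
        rw [this, htrβ, mul_zero, sub_zero]
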